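/- Let α < 0 and let k ≥ 3 be an integer. Define T_0^{IM}(k) = (k+3)/(2k) + ((k+1)/2)(β/α), T_1^{IM}(k) = (k+3)(k−1)/(2k) + ((k+1)/2)(β/α), and T_{λ*}^{IM}(k) = (k+3)/(2k) + (3/k)(β/α). Then: (i) j_k^{IM}(0) > 0 if and only if x* > T_0^{IM}(k); (ii) j_k^{IM}(1) > 0 if and only if x* > T_1^{IM}(k); (iii) b_k^{IM} > 0 if and only if x* > T_{λ*}^{IM}(k), and consequently, if in addition γ + α > 0 and θ > 0, then λ*_{k,IM} < −(β+α)θ/(γ+α) if and only if x* > T_{λ*}^{IM}(k). -/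

import Mathlib

/-- The Ohtsuki–Nowak shift for imitation updating on a `k`-regular graph. -/
noncomputable def bIM (α β γ : ℝ) (k : ℕ) : ℝ :=
  (3 * (α + 2 * β) + (k : ℝ) * (γ + α)) / (((k : ℝ) + 3) * ((k : ℝ) - 2))

/-- Within-group selection gradient for IM updating on a `k`-regular graph. -/
noncomputable def jIM (α β γ : ℝ) (k : ℕ) (x : ℝ) : ℝ :=
  β + α * x + bIM α β γ k

/-- For PD games with `α < 0` and IM updating on a `k`-regular graph (`k ≥ 3`):
(i) the full-defector equilibrium is unstable (`j_k^{IM}(0) > 0`) iff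
`x* = γ/(-2α) > T_0^{IM}(k)`; (ii) the full-cooperator equilibrium is stable
(`j_k^{IM}(1) > 0`) iff `x* > T_1^{IM}(k)`; (iii) `b_k^{IM} > 0` iff
`x* > T_{λ*}^{IM}(k)`, and consequently, if `γ + α > 0` and `θ > 0`, the
multilevel threshold `λ*_{k,IM}` is below the well-mixed threshold
`-(β+α)θ/(γ+α)` iff `x* > T_{λ*}^{IM}(k)`. -/
theorem stmt10 (α β γ θ : ℝ) (hα : α < 0) (k : ℕ) (hk : 3 ≤ k) :
    (jIM α β γ k 0 > 0 ↔
      γ / (-2 * α) > ((k : ℝ) + 3) / (2 * (k : ℝ)) + (((k : ℝ) + 1) / 2) * (β / α)) ∧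
    (jIM α β γ k 1 > 0 ↔
      γ / (-2 * α) > ((k : ℝ) + 3) * ((k : ℝ) - 1) / (2 * (k : ℝ))
        + (((k : ℝ) + 1) / 2) * (β / α)) ∧
    (bIM α β γ k > 0 ↔
      γ / (-2 * α) > ((k : ℝ) + 3) / (2 * (k : ℝ)) + (3 / (k : ℝ)) * (β / α)) ∧
    (γ + α > 0 → θ > 0 →
      (-(β + α + bIM α β γ k) * θ / (γ + α) < -(β + α) * θ / (γ + α) ↔
        γ / (-2 * α) > ((k : ℝ) + 3) / (2 * (k : ℝ)) + (3 / (k : ℝ)) * (β / α))) := by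
  have hα' : α ≠ 0 := ne_of_lt hα
  have hK3 : (3:ℝ) ≤ (k:ℝ) := by exact_mod_cast hk
  have hKpos : (0:ℝ) < (k:ℝ) := by linarith
  have hK0 : (k:ℝ) ≠ 0 := ne_of_gt hKpos
  have hD : (0:ℝ) < ((k:ℝ)+3)*((k:ℝ)-2) := by nlinarith
  have hE : (0:ℝ) < 2*(k:ℝ)*(-α) := by nlinarith
  have key : ∀ P : ℝ, 0 < P / (((k:ℝ)+3)*((k:ℝ)-2)) ↔ 0 < P / (2*(k:ℝ)*(-α)) := by
    intro P
    rw [lt_div_iff₀ hD, lt_div_iff₀ hE, zero_mul, zero_mul]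
  have hb3 : bIM α β γ k > 0 ↔
      γ / (-2 * α) > ((k : ℝ) + 3) / (2 * (k : ℝ)) + (3 / (k : ℝ)) * (β / α) := by
    have h1 : bIM α β γ k =
        ((k:ℝ)*γ + ((k:ℝ)+3)*α + 6*β) / (((k:ℝ)+3)*((k:ℝ)-2)) := by
      rw [bIM]; ring_nf
    have h2 : γ / (-2*α) - (((k:ℝ)+3)/(2*(k:ℝ)) + (3/(k:ℝ))*(β/α)) =
        ((k:ℝ)*γ + ((k:ℝ)+3)*α + 6*β) / (2*(k:ℝ)*(-α)) := by
      field_simp; ring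
    rw [h1, gt_iff_lt, gt_iff_lt]
    conv_rhs => rw [← sub_pos, h2]
    exact key _
  refine ⟨?_, ?_, hb3, ?_⟩
  · have h1 : jIM α β γ k 0 =
        ((k:ℝ)*γ + ((k:ℝ)+3)*α + (k:ℝ)*((k:ℝ)+1)*β) / (((k:ℝ)+3)*((k:ℝ)-2)) := by
      have hk2 : (k:ℝ) - 2 ≠ 0 := ne_of_gt (by linarith)
      have hk3 : (k:ℝ) + 3 ≠ 0 := ne_of_gt (by linarith)
      rw [jIM, bIM]; field_simp; ring
    have h2 : γ / (-2*α) - (((k:ℝ)+3)/(2*(k:ℝ)) + (((k:ℝ)+1)/2)*(β/α)) =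
        ((k:ℝ)*γ + ((k:ℝ)+3)*α + (k:ℝ)*((k:ℝ)+1)*β) / (2*(k:ℝ)*(-α)) := by
      field_simp; ring
    rw [h1, gt_iff_lt, gt_iff_lt]
    conv_rhs => rw [← sub_pos, h2]
    exact key _
  · have h1 : jIM α β γ k 1 =
        ((k:ℝ)*γ + (((k:ℝ)+3)*((k:ℝ)-1))*α + (k:ℝ)*((k:ℝ)+1)*β) /
          (((k:ℝ)+3)*((k:ℝ)-2)) := by
      have hk2 : (k:ℝ) - 2 ≠ 0 := ne_of_gt (by linarith)
      have hk3 : (k:ℝ) + 3 ≠ 0 := ne_of_gt (by linarith)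
      rw [jIM, bIM]; field_simp; ring
    have h2 : γ / (-2*α) - (((k:ℝ)+3)*((k:ℝ)-1)/(2*(k:ℝ)) + (((k:ℝ)+1)/2)*(β/α)) =
        ((k:ℝ)*γ + (((k:ℝ)+3)*((k:ℝ)-1))*α + (k:ℝ)*((k:ℝ)+1)*β) / (2*(k:ℝ)*(-α)) := by
      field_simp; ring
    rw [h1, gt_iff_lt, gt_iff_lt]
    conv_rhs => rw [← sub_pos, h2]
    exact key _
  · intro hγα hθ
    rw [← hb3]
    rw [div_lt_div_iff_of_pos_right hγα]
    constructor
    · intro h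
      nlinarith
    · intro h
      nlinarith
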